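/- Let F be a field, f ∈ F[T], and D_j the j-th hyperdifferential operator on F[T]. Then D_j(f^j) ≡ (f')^j mod f, where f' is the ordinary derivative of f. -/

import Mathlib

open Polynomial Finset

lemma aux_dvd_hasseDeriv (F : Type*) [Field F] (f : Polynomial F) :
    ∀ j k : ℕ, k < j → f ∣ Polynomial.hasseDeriv k (f ^ j) := by
  intro j
  induction j with
  | zero => intro k hk; omega
  | succ j ih =>
    intro k hk
    rw [pow_succ, mul_comm, hasseDeriv_mul]
    apply Finset.dvd_sum
    rintro ⟨i, l⟩ hmem
    rw [Finset.HasAntidiagonal.mem_antidiagonal] at hmem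
    rcases Nat.eq_zero_or_pos i with hi | hi
    · subst hi
      rw [hasseDeriv_zero']
      exact Dvd.dvd.mul_right dvd_rfl _
    · exact Dvd.dvd.mul_left (ih l (by omega)) _

/-- D_j(f^j) ≡ (f')^j mod f for the Hasse–Schmidt derivatives. -/
theorem stmt_6 (F : Type*) [Field F] (f : Polynomial F) (j : ℕ) :
    f ∣ Polynomial.hasseDeriv j (f ^ j) - (Polynomial.derivative f) ^ j := by
  induction j with
  | zero => simp
  | succ j ih =>
    rw [pow_succ, mul_comm, hasseDeriv_mul]
    have hmem : ((1 : ℕ), j) ∈ Finset.HasAntidiagonal.antidiagonal (j + 1) := by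
      rw [Finset.HasAntidiagonal.mem_antidiagonal]; omega
    rw [← Finset.add_sum_erase _ _ hmem]
    have hkey : hasseDeriv 1 f * hasseDeriv j (f ^ j)
        + (∑ x ∈ (Finset.HasAntidiagonal.antidiagonal (j + 1)).erase (1, j),
            hasseDeriv x.1 f * hasseDeriv x.2 (f ^ j))
        - (derivative f) ^ (j + 1)
        = derivative f * (hasseDeriv j (f ^ j) - (derivative f) ^ j)
          + (∑ x ∈ (Finset.HasAntidiagonal.antidiagonal (j + 1)).erase (1, j),
            hasseDeriv x.1 f * hasseDeriv x.2 (f ^ j)) := by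
      rw [hasseDeriv_one']; ring
    rw [hkey]
    apply dvd_add
    · exact Dvd.dvd.mul_left ih _
    · apply Finset.dvd_sum
      rintro ⟨i, l⟩ hmem'
      rw [Finset.mem_erase, Finset.HasAntidiagonal.mem_antidiagonal] at hmem'
      obtain ⟨hne, hsum⟩ := hmem'
      rcases Nat.eq_zero_or_pos i with hi | hi
      · subst hi
        rw [hasseDeriv_zero']
        exact Dvd.dvd.mul_right dvd_rfl _
      · have hl : l < j := by
          by_contra h
          have hi1 : i = 1 := by omega
          have hlj : l = j := by omega
          exact hne (by rw [hi1, hlj])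
        exact Dvd.dvd.mul_left (aux_dvd_hasseDeriv F f j l hl) _
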